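/- Let a = (a^{ij}(x)) be a function on ℝ^d with values in the set of nonnegative symmetric d×d matrices such that a and all its partial derivatives up to second order are bounded in magnitude by a constant K. Then for every symmetric d×d matrix V, every x ∈ ℝ^d and every k ∈ {1,…,d}, one has |∑_{i,j} (∂_k a^{ij})(x) V^{ij}|² ≤ N ∑_{i,j,l} a^{ij}(x) V^{il} V^{jl}, where N is a constant depending only on K and d. -/

import Mathlib

/-- 1D key lemma: a nonnegative function with second derivative bounded by `M`
satisfies `f'(0)² ≤ 4 M f(0)`. -/
lemma sq_deriv_le_of_nonneg {f f' f'' : ℝ → ℝ} {M : ℝ} (hM : 0 < M)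
    (h1 : ∀ t, HasDerivAt f (f' t) t) (h2 : ∀ t, HasDerivAt f' (f'' t) t)
    (hb : ∀ t, |f'' t| ≤ M) (hpos : ∀ t, 0 ≤ f t) :
    (f' 0) ^ 2 ≤ 4 * M * f 0 := by
  have key : ∀ T : ℝ, 0 ≤ f 0 + T * f' 0 + M * T ^ 2 := by
    intro T
    have hf'd : ∀ t : ℝ, |f' t - f' 0| ≤ M * |t| := by
      intro t
      have := Convex.norm_image_sub_le_of_norm_hasDerivWithin_le
        (f := f') (f' := f'') (s := Set.univ)
        (fun s _ => (h2 s).hasDerivWithinAt) (fun s _ => hb s)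
        convex_univ (Set.mem_univ 0) (Set.mem_univ t)
      simpa [Real.norm_eq_abs] using this
    have hφd : ∀ t : ℝ, HasDerivAt (fun s => f s - s * f' 0) (f' t - f' 0) t := fun t =>
      (h1 t).sub (by simpa using (hasDerivAt_id t).mul_const (f' 0))
    have hmem : (0:ℝ) ∈ Set.uIcc (0:ℝ) T := Set.left_mem_uIcc
    have hmem' : T ∈ Set.uIcc (0:ℝ) T := Set.right_mem_uIcc
    have habs : ∀ t ∈ Set.uIcc (0:ℝ) T, |t| ≤ |T| := by
      intro t ht
      rcases Set.mem_uIcc.mp ht with h | h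
      · rw [abs_of_nonneg h.1]; exact h.2.trans (le_abs_self T)
      · rw [abs_of_nonpos h.2]; exact (neg_le_neg h.1).trans (neg_le_abs T)
    have hMVT := Convex.norm_image_sub_le_of_norm_hasDerivWithin_le
      (f := fun s => f s - s * f' 0) (f' := fun t => f' t - f' 0) (s := Set.uIcc (0:ℝ) T)
      (fun s _ => (hφd s).hasDerivWithinAt)
      (fun s hs => by
        simpa [Real.norm_eq_abs] using
          (hf'd s).trans (mul_le_mul_of_nonneg_left (habs s hs) hM.le))
      (convex_uIcc _ _) hmem hmem'
    simp only [Real.norm_eq_abs, mul_zero, sub_zero, zero_mul] at hMVT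
    have h0 := hpos T
    have habsT : |T| * |T| = T ^ 2 := by rw [← abs_mul, abs_mul_self]; ring
    have := abs_le.mp hMVT
    nlinarith [this.1, this.2]
  have h := key (-(f' 0) / (2 * M))
  field_simp at h
  nlinarith [h, hM, mul_pos hM hM, hpos 0]

/-- Derivative of a function along a line. -/
lemma hasDerivAt_comp_line {E : Type*} [NormedAddCommGroup E] [NormedSpace ℝ E]
    {F : Type*} [NormedAddCommGroup F] [NormedSpace ℝ F]
    {f : E → F} (hf : ContDiff ℝ 1 f) (x v : E) (t : ℝ) :
    HasDerivAt (fun s : ℝ => f (x + s • v)) (fderiv ℝ f (x + t • v) v) t := by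
  have h1 : HasDerivAt (fun s : ℝ => x + s • v) v t := by
    simpa using (((hasDerivAt_id t).smul_const v).const_add x)
  exact (hf.differentiable one_ne_zero (x + t • v)).hasFDerivAt.comp_hasDerivAt t h1

/-- The second directional derivative is bounded by the norm of the second iterated
Fréchet derivative. -/
lemma second_deriv_line_bound {E : Type*} [NormedAddCommGroup E] [NormedSpace ℝ E]
    {f : E → ℝ} (hf : ContDiff ℝ 2 f) (y v : E) :
    ‖fderiv ℝ (fun z => fderiv ℝ f z v) y v‖
      ≤ ‖iteratedFDeriv ℝ 2 f y‖ * (‖v‖ * ‖v‖) := by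
  have hd : DifferentiableAt ℝ (fderiv ℝ f) y :=
    ((hf.fderiv_right (m := 1) (by norm_num)).differentiable one_ne_zero) y
  rw [fderiv_clm_apply hd (differentiableAt_const v)]
  simp only [fderiv_const, Pi.zero_apply, ContinuousLinearMap.comp_zero, add_zero,
    ContinuousLinearMap.add_apply, ContinuousLinearMap.flip_apply]
  have h2 : fderiv ℝ (fderiv ℝ f) y v v = iteratedFDeriv ℝ 2 f y ![v, v] := by
    rw [iteratedFDeriv_two_apply]
    simp
  rw [h2]
  have := (iteratedFDeriv ℝ 2 f y).le_opNorm ![v, v]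
  simpa [Fin.prod_univ_two, mul_assoc] using this

/-- Entries of `U * diagonal f * Uᴴ` over `ℝ`. -/
lemma entry_UDU {d : ℕ} (U : Matrix (Fin d) (Fin d) ℝ) (f : Fin d → ℝ) (i j : Fin d) :
    (U * Matrix.diagonal f * star U) i j = ∑ m, U i m * (f m * U j m) := by
  rw [Matrix.mul_assoc]
  simp only [Matrix.mul_apply, Matrix.star_apply, star_trivial, Matrix.diagonal_apply,
    ite_mul, zero_mul, Finset.sum_ite_eq, Finset.mem_univ, if_true]

/-- Rearrangement of a triple sum. -/
lemma swap_sum {d : ℕ} (B : Fin d → Fin d → ℝ) (c : Fin d → ℝ) (w : Fin d → Fin d → ℝ) :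
    (∑ i, ∑ j, B i j * (∑ m, w m i * (c m * w m j)))
      = ∑ m, c m * (∑ i, ∑ j, B i j * w m i * w m j) := by
  simp only [Finset.mul_sum]
  rw [show (∑ i, ∑ j, ∑ m, B i j * (w m i * (c m * w m j)))
      = ∑ i, ∑ m, ∑ j, B i j * (w m i * (c m * w m j)) from
    Finset.sum_congr rfl fun i _ => Finset.sum_comm]
  rw [Finset.sum_comm]
  exact Finset.sum_congr rfl fun m _ => Finset.sum_congr rfl fun i _ =>
    Finset.sum_congr rfl fun j _ => by ring

/-- Lemma 4.2 (from [OR2]): if `a` is a nonnegative symmetric matrix-valued function,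
twice continuously differentiable, with `a` and its derivatives up to second order
bounded by `K`, then `|D_k a^{ij} V^{ij}|² ≤ N a^{ij} V^{ik} V^{jk}` with `N = N(K,d)`. -/
theorem stmt_0 (d : ℕ) (K : ℝ) :
    ∃ N : ℝ, ∀ a : EuclideanSpace ℝ (Fin d) → Matrix (Fin d) (Fin d) ℝ,
      (∀ i j, ContDiff ℝ 2 fun x => a x i j) →
      (∀ x i j, a x i j = a x j i) →
      (∀ x (z : Fin d → ℝ), 0 ≤ ∑ i, ∑ j, a x i j * z i * z j) →
      (∀ x i j n, n ≤ 2 → ‖iteratedFDeriv ℝ n (fun y => a y i j) x‖ ≤ K) →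
      ∀ V : Matrix (Fin d) (Fin d) ℝ, (∀ i j, V i j = V j i) →
      ∀ (x : EuclideanSpace ℝ (Fin d)) (k : Fin d),
        (∑ i, ∑ j, fderiv ℝ (fun y => a y i j) x (EuclideanSpace.single k 1) * V i j) ^ 2
          ≤ N * ∑ i, ∑ j, ∑ l, a x i j * V i l * V j l := by
  refine ⟨4 * (max K 0 * d + 1) * d, ?_⟩
  intro a ha hsym hpos hbnd V hVsym x k
  set e : EuclideanSpace ℝ (Fin d) := EuclideanSpace.single k (1:ℝ) with he_def
  have he : ‖e‖ = 1 := by simp [he_def]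
  have hV : V.IsHermitian := by
    ext i j
    simp [Matrix.conjTranspose_apply, hVsym j i]
  set w : Fin d → EuclideanSpace ℝ (Fin d) := fun m => hV.eigenvectorBasis m with hw
  set μ : Fin d → ℝ := fun m => hV.eigenvalues m with hμ
  -- orthonormality facts
  have hwsq : ∀ m, ∑ i, (w m i) ^ 2 = 1 := by
    intro m
    have h := orthonormal_iff_ite.mp hV.eigenvectorBasis.orthonormal m m
    rw [PiLp.inner_apply] at h
    simp only [if_pos rfl] at h
    simpa [hw, sq] using h
  -- spectral decomposition entrywise
  have hD : Matrix.diagonal (RCLike.ofReal ∘ hV.eigenvalues)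
      = Matrix.diagonal hV.eigenvalues := by ext i j; simp [Matrix.diagonal_apply]
  have hS1 : ∀ i j, V i j = ∑ m, w m i * (μ m * w m j) := by
    intro i j
    conv_lhs => rw [hV.spectral_theorem]
    rw [hD, Unitary.conjStarAlgAut_apply, entry_UDU]
    simp [hw, hμ]
  have hS2 : ∀ i j, (V * V) i j = ∑ m, w m i * (μ m ^ 2 * w m j) := by
    intro i j
    have hu : (star (hV.eigenvectorUnitary : Matrix (Fin d) (Fin d) ℝ)) *
        (hV.eigenvectorUnitary : Matrix (Fin d) (Fin d) ℝ) = 1 :=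
      Unitary.coe_star_mul_self _
    have hVV : V * V = (hV.eigenvectorUnitary : Matrix (Fin d) (Fin d) ℝ) *
        Matrix.diagonal (fun m => hV.eigenvalues m ^ 2) *
        star (hV.eigenvectorUnitary : Matrix (Fin d) (Fin d) ℝ) := by
      conv_lhs => rw [hV.spectral_theorem, hD, Unitary.conjStarAlgAut_apply]
      rw [show ∀ (A B C : Matrix (Fin d) (Fin d) ℝ), (A * B * C) * (A * B * C)
          = A * (B * (C * A) * B) * C from fun A B C => by noncomm_ring]
      rw [hu, Matrix.mul_one, Matrix.diagonal_mul_diagonal]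
      congr 2
      ext m
      ring
    rw [hVV, entry_UDU]
    simp [hw, hμ]
  -- the key one-dimensional estimate for each eigenvector
  have hK0 : (0:ℝ) ≤ max K 0 := le_max_right _ _
  set M : ℝ := max K 0 * d + 1 with hM_def
  have hM : 0 < M := by positivity
  have hmain : ∀ m, (∑ i, ∑ j, fderiv ℝ (fun y => a y i j) x e * w m i * w m j) ^ 2
      ≤ 4 * M * (∑ i, ∑ j, a x i j * w m i * w m j) := by
    intro m
    have hg1 : ∀ t : ℝ, HasDerivAt
        (fun t : ℝ => ∑ i, ∑ j, a (x + t • e) i j * w m i * w m j)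
        (∑ i, ∑ j, fderiv ℝ (fun y => a y i j) (x + t • e) e * w m i * w m j) t := by
      intro t
      apply HasDerivAt.fun_sum; intro i _
      apply HasDerivAt.fun_sum; intro j _
      exact ((hasDerivAt_comp_line ((ha i j).of_le (by norm_num)) x e t).mul_const
        (w m i)).mul_const (w m j)
    have hg2 : ∀ t : ℝ, HasDerivAt
        (fun t : ℝ => ∑ i, ∑ j, fderiv ℝ (fun y => a y i j) (x + t • e) e * w m i * w m j)
        (∑ i, ∑ j, fderiv ℝ (fun y => fderiv ℝ (fun z => a z i j) y e) (x + t • e) e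
          * w m i * w m j) t := by
      intro t
      apply HasDerivAt.fun_sum; intro i _
      apply HasDerivAt.fun_sum; intro j _
      have hcd : ContDiff ℝ 1 fun y => fderiv ℝ (fun z => a z i j) y e :=
        ((ha i j).fderiv_right (m := 1) (by norm_num)).clm_apply contDiff_const
      exact ((hasDerivAt_comp_line hcd x e t).mul_const (w m i)).mul_const (w m j)
    have hb2 : ∀ t : ℝ, |∑ i, ∑ j, fderiv ℝ (fun y => fderiv ℝ (fun z => a z i j) y e)
        (x + t • e) e * w m i * w m j| ≤ M := by
      intro t
      have hterm : ∀ i j : Fin d,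
          |fderiv ℝ (fun y => fderiv ℝ (fun z => a z i j) y e) (x + t • e) e| ≤ max K 0 := by
        intro i j
        have h1 := second_deriv_line_bound (ha i j) (x + t • e) e
        rw [he] at h1
        have h2 : ‖iteratedFDeriv ℝ 2 (fun z => a z i j) (x + t • e)‖ ≤ max K 0 :=
          (hbnd (x + t • e) i j 2 le_rfl).trans (le_max_left _ _)
        calc |fderiv ℝ (fun y => fderiv ℝ (fun z => a z i j) y e) (x + t • e) e|
            ≤ ‖iteratedFDeriv ℝ 2 (fun z => a z i j) (x + t • e)‖ * (1 * 1) := h1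
          _ ≤ max K 0 := by simpa using h2
      have habs : |∑ i, ∑ j, fderiv ℝ (fun y => fderiv ℝ (fun z => a z i j) y e)
          (x + t • e) e * w m i * w m j| ≤ ∑ i, ∑ j, max K 0 * |w m i| * |w m j| := by
        refine (Finset.abs_sum_le_sum_abs _ _).trans ?_
        refine Finset.sum_le_sum fun i _ => ?_
        refine (Finset.abs_sum_le_sum_abs _ _).trans ?_
        refine Finset.sum_le_sum fun j _ => ?_
        rw [abs_mul, abs_mul]
        gcongr
        exact hterm i j
      have hfact : (∑ i, ∑ j, max K 0 * |w m i| * |w m j|)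
          = max K 0 * ((∑ i, |w m i|) * (∑ i, |w m i|)) := by
        simp only [Finset.mul_sum, Finset.sum_mul]
        exact Finset.sum_congr rfl fun i _ => Finset.sum_congr rfl fun j _ => by ring
      have hcheb : (∑ i, |w m i|) * (∑ i, |w m i|) ≤ d := by
        have h1 := sq_sum_le_card_mul_sum_sq (s := Finset.univ) (f := fun i => |w m i|)
        simp only [sq_abs, Finset.card_univ, Fintype.card_fin, hwsq m, mul_one] at h1
        calc (∑ i, |w m i|) * (∑ i, |w m i|) = (∑ i, |w m i|) ^ 2 := by ring
          _ ≤ d := by exact_mod_cast h1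
      refine habs.trans ?_
      rw [hfact, hM_def]
      nlinarith [mul_le_mul_of_nonneg_left hcheb hK0]
    have hgpos : ∀ t : ℝ, 0 ≤ ∑ i, ∑ j, a (x + t • e) i j * w m i * w m j := by
      intro t
      exact hpos (x + t • e) (fun i => w m i)
    have key := sq_deriv_le_of_nonneg hM hg1 hg2 hb2 hgpos
    simpa using key
  -- assemble
  have hLHS : (∑ i, ∑ j, fderiv ℝ (fun y => a y i j) x e * V i j)
      = ∑ m, μ m * (∑ i, ∑ j, fderiv ℝ (fun y => a y i j) x e * w m i * w m j) := by
    simp only [hS1]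
    exact swap_sum _ _ _
  have hRHS : (∑ i, ∑ j, ∑ l, a x i j * V i l * V j l)
      = ∑ m, μ m ^ 2 * (∑ i, ∑ j, a x i j * w m i * w m j) := by
    have h1 : ∀ i j, (∑ l, a x i j * V i l * V j l) = a x i j * ((V * V) i j) := by
      intro i j
      rw [Matrix.mul_apply, Finset.mul_sum]
      exact Finset.sum_congr rfl fun l _ => by rw [hVsym j l]; ring
    simp only [h1, hS2]
    exact swap_sum _ _ _
  rw [hLHS, hRHS]
  have hcs : (∑ m, μ m * (∑ i, ∑ j, fderiv ℝ (fun y => a y i j) x e * w m i * w m j)) ^ 2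
      ≤ (d:ℝ) * ∑ m, (μ m * (∑ i, ∑ j, fderiv ℝ (fun y => a y i j) x e * w m i * w m j)) ^ 2 := by
    have := sq_sum_le_card_mul_sum_sq (s := Finset.univ)
      (f := fun m => μ m * (∑ i, ∑ j, fderiv ℝ (fun y => a y i j) x e * w m i * w m j))
    simpa using this
  refine hcs.trans ?_
  calc (d:ℝ) * ∑ m, (μ m * (∑ i, ∑ j, fderiv ℝ (fun y => a y i j) x e * w m i * w m j)) ^ 2
      ≤ (d:ℝ) * ∑ m, μ m ^ 2 * (4 * M * (∑ i, ∑ j, a x i j * w m i * w m j)) := by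
        refine mul_le_mul_of_nonneg_left (Finset.sum_le_sum fun m _ => ?_) (Nat.cast_nonneg d)
        rw [mul_pow]
        exact mul_le_mul_of_nonneg_left (hmain m) (sq_nonneg _)
    _ = 4 * (max K 0 * d + 1) * d * ∑ m, μ m ^ 2 * (∑ i, ∑ j, a x i j * w m i * w m j) := by
        rw [Finset.mul_sum, Finset.mul_sum]
        exact Finset.sum_congr rfl fun m _ => by rw [hM_def]; ring
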